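/- The programs P3 ∪ { ¬p } and P3 ∪ { ¬q }, where P3 = { p ← q , q ← p }, are not strongly equivalent, even though the formulas p and q are equivalent relative to P3. -/
import Mathlib


open scoped Classical

inductive Lit where
  | pos : ℕ → Lit
  | neg : ℕ → Lit
deriving DecidableEq

inductive Fml where
  | bot : Fml
  | top : Fml
  | lit : Lit → Fml
  | not : Fml → Fml
  | conj : Fml → Fml → Fml
  | disj : Fml → Fml → Fml
deriving DecidableEq

structure Rule where
  head : Fml
  body : Fml
deriving DecidableEq

abbrev Prog := Set Rule

/-- A set of literals is consistent if it contains no complementary pair. -/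
def Consistent (X : Set Lit) : Prop :=
  ∀ a : ℕ, ¬ (Lit.pos a ∈ X ∧ Lit.neg a ∈ X)

def Sat (X : Set Lit) : Fml → Prop
  | Fml.bot => False
  | Fml.top => True
  | Fml.lit l => l ∈ X
  | Fml.not F => ¬ Sat X F
  | Fml.conj F G => Sat X F ∧ Sat X G
  | Fml.disj F G => Sat X F ∨ Sat X G

def SatRule (X : Set Lit) (r : Rule) : Prop := Sat X r.body → Sat X r.head

def SatProg (X : Set Lit) (P : Prog) : Prop := ∀ r ∈ P, SatRule X r

/-- The reduct of a formula relative to X. -/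
noncomputable def Reduct (X : Set Lit) : Fml → Fml
  | Fml.bot => Fml.bot
  | Fml.top => Fml.top
  | Fml.lit l => Fml.lit l
  | Fml.not F => if Sat X F then Fml.bot else Fml.top
  | Fml.conj F G => Fml.conj (Reduct X F) (Reduct X G)
  | Fml.disj F G => Fml.disj (Reduct X F) (Reduct X G)

noncomputable def ReductRule (X : Set Lit) (r : Rule) : Rule :=
  ⟨Reduct X r.head, Reduct X r.body⟩

noncomputable def ReductProg (X : Set Lit) (P : Prog) : Prog :=
  ReductRule X '' P

/-- Y is an answer set for P: Y is minimal among consistent sets satisfying the reduct of P w.r.t. Y. -/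
def AnswerSet (Y : Set Lit) (P : Prog) : Prop :=
  Consistent Y ∧ SatProg Y (ReductProg Y P) ∧
    ∀ Z : Set Lit, Consistent Z → SatProg Z (ReductProg Y P) → Z ⊆ Y → Z = Y

def SEModel (P : Prog) (X Y : Set Lit) : Prop :=
  Consistent X ∧ Consistent Y ∧ X ⊆ Y ∧ SatProg Y P ∧ SatProg X (ReductProg Y P)

def StrongEq (P Q : Prog) : Prop :=
  ∀ R : Prog, ∀ Y : Set Lit, AnswerSet Y (P ∪ R) ↔ AnswerSet Y (Q ∪ R)

def Fml.negFree : Fml → Prop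
  | Fml.bot => True
  | Fml.top => True
  | Fml.lit l => ∃ a, l = Lit.pos a
  | Fml.not F => F.negFree
  | Fml.conj F G => F.negFree ∧ G.negFree
  | Fml.disj F G => F.negFree ∧ G.negFree

def ProgNegFree (P : Prog) : Prop := ∀ r ∈ P, r.head.negFree ∧ r.body.negFree

/-- The set of atoms (positive literals) in a set of literals. -/
def PosLits (Z : Set Lit) : Set Lit := {l ∈ Z | ∃ a, l = Lit.pos a}

def AtomsOnly (Z : Set Lit) : Prop := ∀ l ∈ Z, ∃ a, l = Lit.pos a

/-- with P3 = { p ← q , q ← p }, the formulas p and q are equivalent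
relative to P3, yet P3 ∪ {¬p} and P3 ∪ {¬q} are not strongly equivalent. -/
theorem stmt12 (p q : ℕ) (hpq : p ≠ q) :
    (∀ X Y : Set Lit,
        SEModel ({⟨Fml.lit (Lit.pos p), Fml.lit (Lit.pos q)⟩,
                  ⟨Fml.lit (Lit.pos q), Fml.lit (Lit.pos p)⟩} : Prog) X Y →
        (Sat X (Reduct Y (Fml.lit (Lit.pos p))) ↔ Sat X (Reduct Y (Fml.lit (Lit.pos q))))) ∧
    ¬ StrongEq
        (({⟨Fml.lit (Lit.pos p), Fml.lit (Lit.pos q)⟩,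
           ⟨Fml.lit (Lit.pos q), Fml.lit (Lit.pos p)⟩} : Prog) ∪
          {⟨Fml.lit (Lit.neg p), Fml.top⟩})
        (({⟨Fml.lit (Lit.pos p), Fml.lit (Lit.pos q)⟩,
           ⟨Fml.lit (Lit.pos q), Fml.lit (Lit.pos p)⟩} : Prog) ∪
          {⟨Fml.lit (Lit.neg q), Fml.top⟩}) := by
  constructor
  · rintro X Y ⟨hcX, hcY, hXY, hY, hX⟩
    have h1 : SatRule X (ReductRule Y ⟨Fml.lit (Lit.pos p), Fml.lit (Lit.pos q)⟩) :=
      hX _ ⟨_, Or.inl rfl, rfl⟩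
    have h2 : SatRule X (ReductRule Y ⟨Fml.lit (Lit.pos q), Fml.lit (Lit.pos p)⟩) :=
      hX _ ⟨_, Or.inr rfl, rfl⟩
    exact ⟨fun h => h2 h, fun h => h1 h⟩
  · intro h
    have := (h ∅ {Lit.neg p}).mp ?_
    · obtain ⟨_, hsat, _⟩ := this
      have : SatRule {Lit.neg p} (ReductRule {Lit.neg p} ⟨Fml.lit (Lit.neg q), Fml.top⟩) :=
        hsat _ ⟨_, Or.inl (Or.inr rfl), rfl⟩
      have hq : Lit.neg q ∈ ({Lit.neg p} : Set Lit) := this trivial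
      exact hpq (Lit.neg.inj hq.symm)
    · refine ⟨?_, ?_, ?_⟩
      · intro a ⟨h1, _⟩
        exact Lit.noConfusion h1
      · rintro r ⟨s, hs, rfl⟩
        rcases hs with (hs | hs) | hs
        · rcases hs with hs | hs
          · subst hs; intro hb; exact absurd hb Lit.noConfusion
          · subst hs; intro hb; exact absurd hb Lit.noConfusion
        · cases hs; intro _; exact rfl
        · exact absurd hs (Set.notMem_empty s)
      · intro Z hZc hZs hZsub
        have : SatRule Z (ReductRule {Lit.neg p} ⟨Fml.lit (Lit.neg p), Fml.top⟩) :=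
          hZs _ ⟨_, Or.inl (Or.inr rfl), rfl⟩
        have hmem : Lit.neg p ∈ Z := this trivial
        exact Set.Subset.antisymm hZsub (fun l hl => by cases hl; exact hmem)
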